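/- arXiv:2406.13351 — 3 statements merged into one kernel-verified Lean document; each statement's English description precedes it below -/
import Mathlib

section
/- Deterministic form of the Fed-RAA convergence theorem (Theorem 1). There exists a constant C > 0, depending only on L, ρ, V₁, V₂, such that the following holds. Let E be a real inner product space and F : E → ℝ a differentiable function that is L-smooth and μ-weakly convex with ‖∇F(θ)‖² ≤ V₁ for all θ ∈ E. Fix ρ ≥ μ with ρ ≥ 0, α ∈ (0,1], γ > 0, ε > 0, natural numbers T ≥ 1, 1 ≤ I_min ≤ I_max, and K ≥ 0. Suppose we are given: a sequence θ₀, θ₁, …, θ_T in E; for each q ∈ {1,…,T} a stale index τ(q) ∈ {0,…,q−1} with q−1−τ(q) ≤ K and an integer I_q with I_min ≤ I_q ≤ I_max; local iterates θ_{q,0} = θ_{τ(q)} and θ_{q,i} = θ_{q,i−1} − γ·d_{q,i} for i = 1,…,I_q, where the directions d_{q,i} ∈ E satisfy ‖d_{q,i}‖² ≤ V₂ and ⟪∇F(θ_{q,i−1}) + ρ·(θ_{q,i−1} − θ_{τ(q)}), d_{q,i}⟫ ≥ ε‖∇F(θ_{q,i−1})‖²; the mixing update θ_q = (1−α)·θ_{q−1}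 + α·θ_{q,I_q}; and the global increment bound ‖θ_s − θ_{s−1}‖ ≤ α·γ·I_max·√V₂ for all s ∈ {1,…,T}. Then min over all q ∈ {1,…,T} and i ∈ {1,…,I_q} of ‖∇F(θ_{q,i−1})‖² is at most (F(θ₀) − F(θ_T))/(α·γ·ε·T·I_min) + C·(γ·I_max³ + α·K·I_max + α²·γ·K²·I_max² + γ·K²·I_max²)/(ε·I_min). -/
set_option maxHeartbeats 4000000

open Real Finset

/-- Weak convexity gives a lower linearization bound. -/
lemma weak_convex_lin {E : Type*} [NormedAddCommGroup E] [InnerProductSpace ℝ E]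
    (F : E → ℝ) (F' : E → E) (μ : ℝ)
    (hderiv : ∀ x, HasFDerivAt F (innerSL ℝ (F' x)) x)
    (hconv : ConvexOn ℝ Set.univ (fun θ => F θ + μ / 2 * ‖θ‖ ^ 2))
    (x y : E) :
    (inner ℝ (F' x) (y - x) : ℝ) ≤ F y - F x + μ / 2 * ‖y - x‖ ^ 2 := by
  set G : E → ℝ := fun θ => F θ + μ / 2 * ‖θ‖ ^ 2 with hG
  clear_value G
  -- the path
  have hline : ∀ t : ℝ, (AffineMap.lineMap x y : ℝ →ᵃ[ℝ] E) t = x + t • (y - x) := by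
    intro t
    rw [AffineMap.lineMap_apply_module]
    module
  have hφconv : ConvexOn ℝ Set.univ (G ∘ (AffineMap.lineMap x y : ℝ →ᵃ[ℝ] E)) := by
    have := hconv.comp_affineMap (AffineMap.lineMap x y : ℝ →ᵃ[ℝ] E)
    simpa using this
  have hg : HasDerivAt (fun t : ℝ => x + t • (y - x)) (y - x) 0 := by
    simpa using ((hasDerivAt_id (0:ℝ)).smul_const (y - x)).const_add x
  have hF : HasDerivAt (fun t : ℝ => F (x + t • (y - x))) (inner ℝ (F' x) (y - x)) 0 := by
    have h := (hderiv (x + (0:ℝ) • (y - x))).comp_hasDerivAt 0 hg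
    simp only [zero_smul, add_zero] at h; exact h
  have hn : HasDerivAt (fun t : ℝ => (inner ℝ (x + t • (y - x)) (x + t • (y - x)) : ℝ))
      ((inner ℝ x (y - x) : ℝ) + inner ℝ (y - x) x) 0 := by
    have h := HasDerivAt.inner ℝ hg hg
    simpa using h
  have hφ : HasDerivAt (G ∘ (AffineMap.lineMap x y : ℝ →ᵃ[ℝ] E))
      ((inner ℝ (F' x) (y - x) : ℝ) + μ * inner ℝ x (y - x)) 0 := by
    have h : HasDerivAt (fun t : ℝ => F (x + t • (y - x)) + μ / 2 *
        (inner ℝ (x + t • (y - x)) (x + t • (y - x)) : ℝ))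
        ((inner ℝ (F' x) (y - x) : ℝ) + μ / 2 * ((inner ℝ x (y - x) : ℝ) + inner ℝ (y - x) x)) 0 :=
      hF.add (hn.const_mul (μ / 2))
    have heq : (G ∘ (AffineMap.lineMap x y : ℝ →ᵃ[ℝ] E)) = fun t : ℝ =>
        F (x + t • (y - x)) + μ / 2 * (inner ℝ (x + t • (y - x)) (x + t • (y - x)) : ℝ) := by
      funext t
      simp [hG, hline t, real_inner_self_eq_norm_sq]
    rw [heq]
    convert h using 1
    rw [real_inner_comm (y - x) x]
    ring
  have hslope := hφconv.le_slope_of_hasDerivAt (Set.mem_univ (0:ℝ)) (Set.mem_univ (1:ℝ))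
      one_pos hφ
  have hs : slope (G ∘ (AffineMap.lineMap x y : ℝ →ᵃ[ℝ] E)) 0 1 = G y - G x := by
    simp [slope_def_field, hline, hG]
  rw [hs] at hslope
  have hexp : G y - G x = F y - F x + μ / 2 * (‖y‖ ^ 2 - ‖x‖ ^ 2) := by
    simp [hG]; ring
  have hnorm : ‖y - x‖ ^ 2 = ‖y‖ ^ 2 - 2 * inner ℝ x (y - x) - ‖x‖ ^ 2 := by
    have := @norm_sub_sq_real E _ _ y x
    have h2 : (inner ℝ x (y - x) : ℝ) = inner ℝ x y - ‖x‖ ^ 2 := by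
      rw [inner_sub_right, real_inner_self_eq_norm_sq]
    rw [h2, real_inner_comm y x] at *
    linarith [this]
  have hμ : μ / 2 * ‖y - x‖ ^ 2 = μ / 2 * (‖y‖ ^ 2 - ‖x‖ ^ 2) - μ * inner ℝ x (y - x) := by
    rw [hnorm]; ring
  have h2 : (inner ℝ (F' x) (y - x) : ℝ) ≤
      F y - F x + μ / 2 * (‖y‖ ^ 2 - ‖x‖ ^ 2) - μ * inner ℝ x (y - x) := by
    linarith [hslope, hexp]
  linarith [h2, hμ]

/-- Telescoping bound on increments. -/
lemma tele_norm {E : Type*} [NormedAddCommGroup E] (θ : ℕ → E) (B : ℝ) (T : ℕ)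
    (h : ∀ s ∈ Finset.Icc 1 T, ‖θ s - θ (s - 1)‖ ≤ B) :
    ∀ m n : ℕ, m ≤ n → n ≤ T → ‖θ n - θ m‖ ≤ ((n : ℝ) - (m : ℝ)) * B := by
  intro m n hmn
  induction n, hmn using Nat.le_induction with
  | base => intro _; simp
  | succ n hmn ih =>
    intro hnT
    have h1 : ‖θ (n + 1) - θ n‖ ≤ B := by
      have := h (n + 1) (Finset.mem_Icc.mpr ⟨Nat.succ_le_succ (Nat.zero_le n), hnT⟩)
      simpa using this
    have h2 := ih (le_trans (Nat.le_succ n) hnT)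
    calc ‖θ (n + 1) - θ m‖ ≤ ‖θ (n + 1) - θ n‖ + ‖θ n - θ m‖ :=
          norm_sub_le_norm_sub_add_norm_sub _ _ _
      _ ≤ B + ((n : ℝ) - m) * B := add_le_add h1 h2
      _ = (((n + 1 : ℕ) : ℝ) - (m : ℝ)) * B := by push_cast; ring

/-- **Deterministic form of the Fed-RAA convergence theorem (Theorem 1).**
There is a constant `C > 0` depending only on `L, ρ, V₁, V₂` such that for any `L`-smooth,
`μ`-weakly convex differentiable `F` (gradient `F'`, `‖F' θ‖² ≤ V₁`), any `ρ ≥ μ`, `ρ ≥ 0`,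
`α ∈ (0,1]`, `γ > 0`, `ε > 0`, `T ≥ 1`, `1 ≤ I_min ≤ I_max`, `K ≥ 0`, and any trajectory
(global models `θ q`, stale indices `τ q` with `τ q < q` and `q - 1 - τ q ≤ K`, local
iterate counts `I_min ≤ I q ≤ I_max`, local iterates `θloc` driven by directions `d` with
`‖d q i‖² ≤ V₂` and `⟪∇F(θloc q (i-1)) + ρ(θloc q (i-1) - θ (τ q)), d q i⟫ ≥
ε ‖∇F(θloc q (i-1))‖²`, mixing updates `θ q = (1-α) θ (q-1) + α θloc q (I q)`, and global
increments bounded by `α γ I_max √V₂`), the minimum of `‖∇F(θloc q (i-1))‖²` over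
`q ∈ {1,…,T}`, `i ∈ {1,…,I q}` is at most
`(F(θ 0) - F(θ T))/(α γ ε T I_min) +
 C (γ I_max³ + α K I_max + α² γ K² I_max² + γ K² I_max²)/(ε I_min)`. -/
theorem fedRAA_deterministic_convergence (L ρ V₁ V₂ : ℝ) :
    ∃ C > (0 : ℝ),
      ∀ (E : Type*) [NormedAddCommGroup E] [InnerProductSpace ℝ E]
        (F : E → ℝ) (F' : E → E) (μ : ℝ),
        (∀ x, HasFDerivAt F (innerSL ℝ (F' x)) x) →
        (∀ x y : E, F y - F x ≤ inner ℝ (F' x) (y - x) + L / 2 * ‖y - x‖ ^ 2) →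
        0 ≤ μ →
        ConvexOn ℝ Set.univ (fun θ => F θ + μ / 2 * ‖θ‖ ^ 2) →
        (∀ θ : E, ‖F' θ‖ ^ 2 ≤ V₁) →
        μ ≤ ρ → 0 ≤ ρ →
        ∀ (α γ ε : ℝ), α ∈ Set.Ioc (0 : ℝ) 1 → 0 < γ → 0 < ε →
        ∀ (T Imin Imax K : ℕ), 1 ≤ T → 1 ≤ Imin → Imin ≤ Imax →
        ∀ (θ : ℕ → E) (τ : ℕ → ℕ) (I : ℕ → ℕ) (θloc : ℕ → ℕ → E) (d : ℕ → ℕ → E),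
        (∀ q ∈ Finset.Icc 1 T, τ q < q ∧ q - 1 - τ q ≤ K) →
        (∀ q ∈ Finset.Icc 1 T, Imin ≤ I q ∧ I q ≤ Imax) →
        (∀ q ∈ Finset.Icc 1 T, θloc q 0 = θ (τ q)) →
        (∀ q ∈ Finset.Icc 1 T, ∀ i ∈ Finset.Icc 1 (I q),
          θloc q i = θloc q (i - 1) - γ • d q i) →
        (∀ q ∈ Finset.Icc 1 T, ∀ i ∈ Finset.Icc 1 (I q), ‖d q i‖ ^ 2 ≤ V₂) →
        (∀ q ∈ Finset.Icc 1 T, ∀ i ∈ Finset.Icc 1 (I q),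
          ε * ‖F' (θloc q (i - 1))‖ ^ 2 ≤
            inner ℝ (F' (θloc q (i - 1)) + ρ • (θloc q (i - 1) - θ (τ q))) (d q i)) →
        (∀ q ∈ Finset.Icc 1 T, θ q = (1 - α) • θ (q - 1) + α • θloc q (I q)) →
        (∀ s ∈ Finset.Icc 1 T, ‖θ s - θ (s - 1)‖ ≤ α * γ * Imax * Real.sqrt V₂) →
        ∃ q ∈ Finset.Icc 1 T, ∃ i ∈ Finset.Icc 1 (I q),
          ‖F' (θloc q (i - 1))‖ ^ 2 ≤
            (F (θ 0) - F (θ T)) / (α * γ * ε * T * Imin) +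
              C * (γ * (Imax : ℝ) ^ 3 + α * K * Imax +
                α ^ 2 * γ * K ^ 2 * (Imax : ℝ) ^ 2 + γ * K ^ 2 * (Imax : ℝ) ^ 2) /
                (ε * Imin) := by
  refine ⟨1 + 2 * (|ρ| + |L|) * |V₂| + (1 + |V₁|) * (1 + |V₂|), by positivity, ?_⟩
  set C : ℝ := 1 + 2 * (|ρ| + |L|) * |V₂| + (1 + |V₁|) * (1 + |V₂|) with hCdef
  clear_value C
  have hC0 : (0 : ℝ) < C := by rw [hCdef]; positivity
  intro E _ _ F F' μ hderiv hsmooth hμ0 hconv hV₁ hμρ hρ0 α γ ε hα hγ hε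
    T Imin Imax K hT hImin hIminmax θ τ I θloc d hτ hI hloc0 hlocstep hdV hdir hmix hinc
  obtain ⟨hα0, hα1⟩ := hα
  have habsL : (0 : ℝ) ≤ |L| := abs_nonneg L
  have h1T : (1 : ℕ) ∈ Finset.Icc 1 T := Finset.mem_Icc.mpr ⟨le_refl 1, hT⟩
  have h1I1 : (1 : ℕ) ∈ Finset.Icc 1 (I 1) :=
    Finset.mem_Icc.mpr ⟨le_refl 1, le_trans hImin (hI 1 h1T).1⟩
  have hV₁0 : 0 ≤ V₁ := le_trans (by positivity) (hV₁ 0)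
  have hV₂0 : 0 ≤ V₂ := le_trans (by positivity) (hdV 1 h1T 1 h1I1)
  set sV₁ : ℝ := Real.sqrt V₁ with hsV₁def
  set sV₂ : ℝ := Real.sqrt V₂ with hsV₂def
  have hsV₁0 : 0 ≤ sV₁ := Real.sqrt_nonneg _
  have hsV₂0 : 0 ≤ sV₂ := Real.sqrt_nonneg _
  have hsV₂sq : sV₂ ^ 2 = V₂ := Real.sq_sqrt hV₂0
  have hsV₁sq : sV₁ ^ 2 = V₁ := Real.sq_sqrt hV₁0
  have hsV₁le : sV₁ ≤ (1 + V₁) / 2 := by linarith only [hsV₁sq, sq_nonneg (sV₁ - 1)]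
  have hsV₂le : sV₂ ≤ (1 + V₂) / 2 := by linarith only [hsV₂sq, sq_nonneg (sV₂ - 1)]
  have hdnorm : ∀ q ∈ Finset.Icc 1 T, ∀ i ∈ Finset.Icc 1 (I q), ‖d q i‖ ≤ sV₂ := by
    intro q hq i hi
    rw [hsV₂def, show ‖d q i‖ = Real.sqrt (‖d q i‖ ^ 2) from (Real.sqrt_sq (norm_nonneg _)).symm]
    exact Real.sqrt_le_sqrt (hdV q hq i hi)
  have hgnorm : ∀ x : E, ‖F' x‖ ≤ sV₁ := by
    intro x
    rw [hsV₁def, show ‖F' x‖ = Real.sqrt (‖F' x‖ ^ 2) from (Real.sqrt_sq (norm_nonneg _)).symm]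
    exact Real.sqrt_le_sqrt (hV₁ x)
  clear_value sV₁ sV₂
  have hImax1 : (1 : ℝ) ≤ (Imax : ℝ) := by exact_mod_cast le_trans hImin hIminmax
  have hImax0 : (0 : ℝ) ≤ (Imax : ℝ) := by linarith
  have hK0 : (0 : ℝ) ≤ (K : ℝ) := Nat.cast_nonneg K
  -- local iterate formula
  have hlocsum : ∀ q ∈ Finset.Icc 1 T, ∀ n : ℕ, n ≤ I q →
      θloc q n = θ (τ q) - γ • (∑ j ∈ Finset.Icc 1 n, d q j) := by
    intro q hq n
    induction n with
    | zero => intro _; simp [hloc0 q hq]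
    | succ n ih =>
      intro h
      have hn : n ≤ I q := le_trans (Nat.le_succ n) h
      rw [hlocstep q hq (n + 1) (Finset.mem_Icc.mpr ⟨Nat.succ_le_succ (Nat.zero_le n), h⟩)]
      simp only [Nat.add_sub_cancel]
      rw [ih hn, Finset.sum_Icc_succ_top (Nat.succ_le_succ (Nat.zero_le n)), smul_add]
      abel
  -- local drift bound
  have hlocdist : ∀ q ∈ Finset.Icc 1 T, ∀ n : ℕ, n ≤ I q →
      ‖θloc q n - θ (τ q)‖ ≤ γ * n * sV₂ := by
    intro q hq n hn
    rw [hlocsum q hq n hn]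
    have h1 : θ (τ q) - γ • (∑ j ∈ Finset.Icc 1 n, d q j) - θ (τ q)
        = -(γ • (∑ j ∈ Finset.Icc 1 n, d q j)) := by abel
    rw [h1, norm_neg, norm_smul, Real.norm_eq_abs, abs_of_pos hγ]
    have h2 : ‖∑ j ∈ Finset.Icc 1 n, d q j‖ ≤ (n : ℝ) * sV₂ := by
      calc ‖∑ j ∈ Finset.Icc 1 n, d q j‖ ≤ ∑ j ∈ Finset.Icc 1 n, ‖d q j‖ :=
            norm_sum_le _ _
        _ ≤ ∑ _j ∈ Finset.Icc 1 n, sV₂ := by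
            refine Finset.sum_le_sum fun j hj => hdnorm q hq j ?_
            rw [Finset.mem_Icc] at hj ⊢
            exact ⟨hj.1, le_trans hj.2 hn⟩
        _ = (n : ℝ) * sV₂ := by
            rw [Finset.sum_const, Nat.card_Icc]
            simp [nsmul_eq_mul]
    calc γ * ‖∑ j ∈ Finset.Icc 1 n, d q j‖ ≤ γ * ((n : ℝ) * sV₂) :=
          mul_le_mul_of_nonneg_left h2 hγ.le
      _ = γ * n * sV₂ := by ring
  -- max local drift
  have hlocdist' : ∀ q ∈ Finset.Icc 1 T, ∀ n : ℕ, n ≤ I q →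
      ‖θloc q n - θ (τ q)‖ ≤ γ * Imax * sV₂ := by
    intro q hq n hn
    have h2 : ((n : ℕ) : ℝ) ≤ (Imax : ℝ) := by
      exact_mod_cast le_trans hn (hI q hq).2
    calc ‖θloc q n - θ (τ q)‖ ≤ γ * n * sV₂ := hlocdist q hq n hn
      _ ≤ γ * Imax * sV₂ := by
          exact mul_le_mul_of_nonneg_right (mul_le_mul_of_nonneg_left h2 hγ.le) hsV₂0
  -- per-step descent
  set A : ℝ := ρ * Imax * V₂ + |L| / 2 * V₂ with hAdef
  have hA0 : 0 ≤ A := by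
    rw [hAdef]
    have h1 := mul_nonneg (mul_nonneg hρ0 hImax0) hV₂0
    have h2 := mul_nonneg habsL hV₂0
    linarith
  clear_value A
  have hstep : ∀ q ∈ Finset.Icc 1 T, ∀ i ∈ Finset.Icc 1 (I q),
      F (θloc q i) ≤ F (θloc q (i - 1)) - γ * ε * ‖F' (θloc q (i - 1))‖ ^ 2 + γ ^ 2 * A := by
    intro q hq i hi
    obtain ⟨hi1, hi2⟩ := Finset.mem_Icc.mp hi
    have hdiff : θloc q i - θloc q (i - 1) = -(γ • d q i) := by
      rw [hlocstep q hq i hi]; abel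
    have hsm := hsmooth (θloc q (i - 1)) (θloc q i)
    rw [hdiff, inner_neg_right, real_inner_smul_right, norm_neg, norm_smul,
      Real.norm_eq_abs, abs_of_pos hγ] at hsm
    have hdir' := hdir q hq i hi
    rw [inner_add_left, real_inner_smul_left] at hdir'
    have hxdist : ‖θloc q (i - 1) - θ (τ q)‖ ≤ γ * Imax * sV₂ :=
      hlocdist' q hq (i - 1) (le_trans (Nat.sub_le i 1) hi2)
    have hIP : (inner ℝ (θloc q (i - 1) - θ (τ q)) (d q i) : ℝ) ≤ γ * Imax * V₂ := by
      calc (inner ℝ (θloc q (i - 1) - θ (τ q)) (d q i) : ℝ)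
          ≤ ‖θloc q (i - 1) - θ (τ q)‖ * ‖d q i‖ := real_inner_le_norm _ _
        _ ≤ (γ * Imax * sV₂) * sV₂ :=
            mul_le_mul hxdist (hdnorm q hq i hi) (norm_nonneg _) (by positivity)
        _ = γ * Imax * V₂ := by rw [← hsV₂sq]; ring
    have hd2 := hdV q hq i hi
    have ht : (γ * ‖d q i‖) ^ 2 ≤ γ ^ 2 * V₂ := by
      linarith [mul_le_mul_of_nonneg_left hd2 (sq_nonneg γ)]
    have hLb : L / 2 * (γ * ‖d q i‖) ^ 2 ≤ |L| / 2 * (γ ^ 2 * V₂) := by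
      have f1 := mul_nonneg (sub_nonneg.2 (le_abs_self L)) (sq_nonneg (γ * ‖d q i‖))
      have f2 := mul_nonneg habsL (sub_nonneg.2 ht)
      linarith [f1, f2]
    have hgd : ε * ‖F' (θloc q (i - 1))‖ ^ 2 - ρ * (γ * Imax * V₂)
        ≤ (inner ℝ (F' (θloc q (i - 1))) (d q i) : ℝ) := by
      have := mul_le_mul_of_nonneg_left hIP hρ0
      linarith [hdir']
    have hgdγ := mul_le_mul_of_nonneg_left hgd hγ.le
    rw [hAdef]
    linarith only [hsm, hgdγ, hLb]
  -- local sums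
  set S : ℕ → ℝ := fun q => ∑ i ∈ Finset.Icc 1 (I q), ‖F' (θloc q (i - 1))‖ ^ 2 with hSdef
  clear_value S
  have hS0 : ∀ q, 0 ≤ S q := by
    intro q; simp only [hSdef]; exact Finset.sum_nonneg fun i _ => by positivity
  have hsumq : ∀ q ∈ Finset.Icc 1 T,
      F (θloc q (I q)) ≤ F (θ (τ q)) - γ * ε * S q + (Imax : ℝ) * (γ ^ 2 * A) := by
    intro q hq
    have key : ∀ n : ℕ, n ≤ I q → F (θloc q n) ≤
        F (θ (τ q)) - γ * ε * (∑ i ∈ Finset.Icc 1 n, ‖F' (θloc q (i - 1))‖ ^ 2)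
          + (n : ℝ) * (γ ^ 2 * A) := by
      intro n
      induction n with
      | zero => intro _; simp [hloc0 q hq]
      | succ n ih =>
        intro h
        have hn : n ≤ I q := le_trans (Nat.le_succ n) h
        have h1 := hstep q hq (n + 1) (Finset.mem_Icc.mpr ⟨Nat.succ_le_succ (Nat.zero_le n), h⟩)
        simp only [Nat.add_sub_cancel] at h1
        have h2 := ih hn
        rw [Finset.sum_Icc_succ_top (Nat.succ_le_succ (Nat.zero_le n))]
        simp only [Nat.add_sub_cancel]
        push_cast
        linarith only [h1, h2]
    have h1 := key (I q) (le_refl _)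
    simp only [hSdef]
    have h2 : ((I q : ℕ) : ℝ) * (γ ^ 2 * A) ≤ (Imax : ℝ) * (γ ^ 2 * A) := by
      have : ((I q : ℕ) : ℝ) ≤ (Imax : ℝ) := by exact_mod_cast (hI q hq).2
      exact mul_le_mul_of_nonneg_right this (by positivity)
    linarith only [h1, h2]
  -- staleness
  set B : ℝ := α * γ * Imax * sV₂ with hBdef
  have hB0 : 0 ≤ B := by rw [hBdef]; positivity
  clear_value B
  have hstale : ∀ q ∈ Finset.Icc 1 T, ‖θ (q - 1) - θ (τ q)‖ ≤ (K : ℝ) * B := by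
    intro q hq
    obtain ⟨hq1, hq2⟩ := Finset.mem_Icc.mp hq
    obtain ⟨hτ1, hτ2⟩ := hτ q hq
    have hτle : τ q ≤ q - 1 := Nat.le_sub_one_of_lt hτ1
    have h1 := tele_norm θ B T hinc (τ q) (q - 1) hτle
      (le_trans (Nat.sub_le q 1) hq2)
    have h2 : ((q - 1 : ℕ) : ℝ) - ((τ q : ℕ) : ℝ) ≤ (K : ℝ) := by
      have h3 : ((q - 1 - τ q : ℕ) : ℝ) ≤ (K : ℝ) := by exact_mod_cast hτ2
      rw [Nat.cast_sub hτle] at h3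
      exact h3
    calc ‖θ (q - 1) - θ (τ q)‖ ≤ (((q - 1 : ℕ) : ℝ) - (τ q : ℝ)) * B := h1
      _ ≤ (K : ℝ) * B := mul_le_mul_of_nonneg_right h2 hB0
  -- global per-round descent
  set D : ℝ := γ * Imax * sV₂ + (K : ℝ) * B with hDdef
  have hD0 : 0 ≤ D := by rw [hDdef]; positivity
  clear_value D
  set R : ℝ := γ ^ 2 * A * Imax + sV₁ * ((K : ℝ) * B) + |L| / 2 * ((K : ℝ) * B) ^ 2
      + (ρ + |L|) / 2 * D ^ 2 with hRdef
  clear_value R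
  have hglob : ∀ q ∈ Finset.Icc 1 T,
      F (θ q) ≤ F (θ (q - 1)) - α * (γ * ε * S q) + α * R := by
    intro q hq
    have hθq : θ q - θ (q - 1) = α • (θloc q (I q) - θ (q - 1)) := by
      rw [hmix q hq]; module
    have hsm := hsmooth (θ (q - 1)) (θ q)
    rw [hθq, real_inner_smul_right, norm_smul, Real.norm_eq_abs, abs_of_pos hα0] at hsm
    have hwc := weak_convex_lin F F' μ hderiv hconv (θ (q - 1)) (θloc q (I q))
    have hδD : ‖θloc q (I q) - θ (q - 1)‖ ≤ D := by
      rw [hDdef]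
      calc ‖θloc q (I q) - θ (q - 1)‖
          = ‖(θloc q (I q) - θ (τ q)) + (θ (τ q) - θ (q - 1))‖ := by congr 1; abel
        _ ≤ ‖θloc q (I q) - θ (τ q)‖ + ‖θ (τ q) - θ (q - 1)‖ := norm_add_le _ _
        _ ≤ γ * Imax * sV₂ + (K : ℝ) * B := by
            refine add_le_add (hlocdist' q hq (I q) (le_refl _)) ?_
            rw [norm_sub_rev]; exact hstale q hq
    have hδ2 : ‖θloc q (I q) - θ (q - 1)‖ ^ 2 ≤ D ^ 2 :=
      pow_le_pow_left₀ (norm_nonneg _) hδD 2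
    have hFst : F (θ (τ q)) - F (θ (q - 1)) ≤
        sV₁ * ((K : ℝ) * B) + |L| / 2 * ((K : ℝ) * B) ^ 2 := by
      have h1 := hsmooth (θ (q - 1)) (θ (τ q))
      have hst : ‖θ (τ q) - θ (q - 1)‖ ≤ (K : ℝ) * B := by
        rw [norm_sub_rev]; exact hstale q hq
      have h2 : (inner ℝ (F' (θ (q - 1))) (θ (τ q) - θ (q - 1)) : ℝ) ≤ sV₁ * ((K : ℝ) * B) := by
        calc (inner ℝ (F' (θ (q - 1))) (θ (τ q) - θ (q - 1)) : ℝ)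
            ≤ ‖F' (θ (q - 1))‖ * ‖θ (τ q) - θ (q - 1)‖ := real_inner_le_norm _ _
          _ ≤ sV₁ * ((K : ℝ) * B) := mul_le_mul (hgnorm _) hst (norm_nonneg _) hsV₁0
      have h3 : ‖θ (τ q) - θ (q - 1)‖ ^ 2 ≤ ((K : ℝ) * B) ^ 2 :=
        pow_le_pow_left₀ (norm_nonneg _) hst 2
      have h4 : L / 2 * ‖θ (τ q) - θ (q - 1)‖ ^ 2 ≤ |L| / 2 * ((K : ℝ) * B) ^ 2 := by
        have f1 := mul_nonneg (sub_nonneg.2 (le_abs_self L))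
          (sq_nonneg ‖θ (τ q) - θ (q - 1)‖)
        have f2 := mul_nonneg habsL (sub_nonneg.2 h3)
        linarith [f1, f2]
      linarith only [h1, h2, h4]
    have hsq := hsumq q hq
    have hμδ : μ / 2 * ‖θloc q (I q) - θ (q - 1)‖ ^ 2 ≤ ρ / 2 * D ^ 2 := by
      have f1 := mul_le_mul_of_nonneg_left hδ2 (by linarith : (0:ℝ) ≤ μ / 2)
      have f2 : μ / 2 * D ^ 2 ≤ ρ / 2 * D ^ 2 := by
        have := mul_le_mul_of_nonneg_right (by linarith : μ / 2 ≤ ρ / 2) (sq_nonneg D)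
        linarith
      linarith
    have hLα : L / 2 * (α * ‖θloc q (I q) - θ (q - 1)‖) ^ 2 ≤ α * (|L| / 2 * D ^ 2) := by
      have e1 : α ^ 2 * ‖θloc q (I q) - θ (q - 1)‖ ^ 2 ≤ α * D ^ 2 := by
        have g1 := mul_le_mul_of_nonneg_left hδ2 (sq_nonneg α)
        have g2 : (0:ℝ) ≤ (α * (1 - α)) * D ^ 2 :=
          mul_nonneg (mul_nonneg hα0.le (by linarith only [hα1])) (sq_nonneg D)
        linarith only [g1, g2]
      have f1 := mul_nonneg (sub_nonneg.2 (le_abs_self L))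
        (mul_nonneg (sq_nonneg α) (sq_nonneg ‖θloc q (I q) - θ (q - 1)‖))
      have f2 := mul_nonneg habsL (sub_nonneg.2 e1)
      linarith [f1, f2]
    have hwc' := mul_le_mul_of_nonneg_left hwc hα0.le
    have hmainα := mul_le_mul_of_nonneg_left
      (by linarith [hsq, hFst] : F (θloc q (I q)) - F (θ (q - 1)) ≤
        - (γ * ε * S q) + (Imax : ℝ) * (γ ^ 2 * A) + sV₁ * ((K : ℝ) * B)
          + |L| / 2 * ((K : ℝ) * B) ^ 2) hα0.le
    have hμδα := mul_le_mul_of_nonneg_left hμδ hα0.le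
    rw [hRdef]
    linarith only [hsm, hwc', hmainα, hμδα, hLα]
  -- telescope over rounds
  have htele : ∀ n : ℕ, n ≤ T → F (θ n) ≤
      F (θ 0) - α * γ * ε * (∑ q ∈ Finset.Icc 1 n, S q) + (n : ℝ) * (α * R) := by
    intro n
    induction n with
    | zero => intro _; simp
    | succ n ih =>
      intro h
      have hn : n ≤ T := le_trans (Nat.le_succ n) h
      have h1 := hglob (n + 1) (Finset.mem_Icc.mpr ⟨Nat.succ_le_succ (Nat.zero_le n), h⟩)
      simp only [Nat.add_sub_cancel] at h1
      have h2 := ih hn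
      rw [Finset.sum_Icc_succ_top (Nat.succ_le_succ (Nat.zero_le n))]
      push_cast
      linarith only [h1, h2]
  have hteleT := htele T (le_refl T)
  -- minimum extraction
  obtain ⟨p, hp, hmin⟩ := Finset.exists_min_image
    ((Finset.Icc 1 T).sigma (fun q => Finset.Icc 1 (I q)))
    (fun p => ‖F' (θloc p.1 (p.2 - 1))‖ ^ 2)
    ⟨⟨1, 1⟩, Finset.mem_sigma.mpr ⟨h1T, h1I1⟩⟩
  obtain ⟨hpq, hpi⟩ := Finset.mem_sigma.mp hp
  refine ⟨p.1, hpq, p.2, hpi, ?_⟩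
  set m : ℝ := ‖F' (θloc p.1 (p.2 - 1))‖ ^ 2 with hmdef
  have hm0 : 0 ≤ m := by rw [hmdef]; positivity
  clear_value m
  have hSlb : ∀ q ∈ Finset.Icc 1 T, (Imin : ℝ) * m ≤ S q := by
    intro q hq
    have h1 : ∀ i ∈ Finset.Icc 1 (I q), m ≤ ‖F' (θloc q (i - 1))‖ ^ 2 := by
      intro i hi
      have := hmin ⟨q, i⟩ (Finset.mem_sigma.mpr ⟨hq, hi⟩)
      simpa using this
    calc (Imin : ℝ) * m ≤ (I q : ℝ) * m := by
          have : (Imin : ℝ) ≤ (I q : ℝ) := by exact_mod_cast (hI q hq).1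
          exact mul_le_mul_of_nonneg_right this hm0
      _ = ∑ _i ∈ Finset.Icc 1 (I q), m := by
          rw [Finset.sum_const, Nat.card_Icc]; simp [nsmul_eq_mul]
      _ ≤ S q := by simp only [hSdef]; exact Finset.sum_le_sum h1
  have hStot : (T : ℝ) * ((Imin : ℝ) * m) ≤ ∑ q ∈ Finset.Icc 1 T, S q := by
    calc (T : ℝ) * ((Imin : ℝ) * m) = ∑ _q ∈ Finset.Icc 1 T, (Imin : ℝ) * m := by
          rw [Finset.sum_const, Nat.card_Icc]; simp [nsmul_eq_mul]
      _ ≤ ∑ q ∈ Finset.Icc 1 T, S q := Finset.sum_le_sum hSlb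
  have hkey : α * γ * ε * (T : ℝ) * (Imin : ℝ) * m ≤
      F (θ 0) - F (θ T) + (T : ℝ) * (α * R) := by
    have h1 := mul_le_mul_of_nonneg_left hStot
      (by positivity : (0:ℝ) ≤ α * γ * ε)
    linarith only [hteleT, h1]
  -- final bound on R
  have hT0 : (0 : ℝ) < (T : ℝ) := by exact_mod_cast Nat.lt_of_lt_of_le Nat.zero_lt_one hT
  have hImin0 : (0 : ℝ) < (Imin : ℝ) := by exact_mod_cast Nat.lt_of_lt_of_le Nat.zero_lt_one hImin
  have habsρ : |ρ| = ρ := abs_of_nonneg hρ0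
  have habsV₂ : |V₂| = V₂ := abs_of_nonneg hV₂0
  have habsV₁ : |V₁| = V₁ := abs_of_nonneg hV₁0
  have e1 : (0:ℝ) ≤ |L| * V₂ := mul_nonneg habsL hV₂0
  have e2 : (0:ℝ) ≤ ρ * V₂ := mul_nonneg hρ0 hV₂0
  have e4 : (0:ℝ) ≤ V₁ * V₂ := mul_nonneg hV₁0 hV₂0
  have hCa : 2 * ρ * V₂ + 3 / 2 * (|L| * V₂) ≤ C := by
    rw [hCdef, habsρ, habsV₂, habsV₁]
    linarith only [e1, e2, e4, hV₁0, hV₂0]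
  have hCb : (1 + V₁) * (1 + V₂) / 4 ≤ C := by
    rw [hCdef, habsρ, habsV₂, habsV₁]
    linarith only [e1, e2, e4, hV₁0, hV₂0]
  set brk : ℝ := γ * (Imax : ℝ) ^ 3 + α * K * Imax +
      α ^ 2 * γ * K ^ 2 * (Imax : ℝ) ^ 2 + γ * K ^ 2 * (Imax : ℝ) ^ 2 with hbrkdef
  clear_value brk
  have hI32 : (Imax : ℝ) ^ 2 ≤ (Imax : ℝ) ^ 3 := by
    have h := mul_nonneg (sq_nonneg (Imax : ℝ))
      (by linarith only [hImax1] : (0:ℝ) ≤ (Imax : ℝ) - 1)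
    linarith only [h]
  have hI31 : (Imax : ℝ) ≤ (Imax : ℝ) ^ 3 := by
    have h := mul_nonneg (mul_nonneg hImax0
      (by linarith only [hImax1] : (0:ℝ) ≤ (Imax : ℝ) - 1))
      (by linarith only [hImax0] : (0:ℝ) ≤ (Imax : ℝ) + 1)
    linarith only [h]
  have hρL0 : (0 : ℝ) ≤ (ρ + |L|) / 2 := by linarith
  have hRb : R ≤ C * γ * brk := by
    have hD2 : D ^ 2 ≤ 2 * (γ ^ 2 * (Imax : ℝ) ^ 2 * V₂) +
        2 * (α ^ 2 * (K : ℝ) ^ 2 * γ ^ 2 * (Imax : ℝ) ^ 2 * V₂) := by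
      have hu : (γ * (Imax : ℝ) * sV₂) ^ 2 = γ ^ 2 * (Imax : ℝ) ^ 2 * V₂ := by
        rw [mul_pow, mul_pow, hsV₂sq]
      have hgoal : D ^ 2 = (γ * (Imax : ℝ) * sV₂) ^ 2 * (1 + (K : ℝ) * α) ^ 2 := by
        rw [hDdef, hBdef]; ring
      rw [hgoal, hu]
      linarith only [mul_nonneg (by positivity : (0:ℝ) ≤ γ ^ 2 * (Imax : ℝ) ^ 2 * V₂)
        (sq_nonneg ((K : ℝ) * α - 1))]
    have h1 : γ ^ 2 * A * Imax + (ρ + |L|) / 2 * (2 * (γ ^ 2 * (Imax : ℝ) ^ 2 * V₂)) ≤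
        C * γ * (γ * (Imax : ℝ) ^ 3) := by
      rw [hAdef]
      have a1 : ρ * V₂ * γ ^ 2 * (Imax : ℝ) ^ 2 ≤ ρ * V₂ * γ ^ 2 * (Imax : ℝ) ^ 3 :=
        mul_le_mul_of_nonneg_left hI32
          (mul_nonneg (mul_nonneg hρ0 hV₂0) (sq_nonneg γ))
      have a2 : |L| * V₂ * γ ^ 2 * (Imax : ℝ) ≤ |L| * V₂ * γ ^ 2 * (Imax : ℝ) ^ 3 :=
        mul_le_mul_of_nonneg_left hI31
          (mul_nonneg (mul_nonneg habsL hV₂0) (sq_nonneg γ))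
      have a3 : |L| * V₂ * γ ^ 2 * (Imax : ℝ) ^ 2 ≤ |L| * V₂ * γ ^ 2 * (Imax : ℝ) ^ 3 :=
        mul_le_mul_of_nonneg_left hI32
          (mul_nonneg (mul_nonneg habsL hV₂0) (sq_nonneg γ))
      have cs := mul_le_mul_of_nonneg_right hCa
        (by positivity : (0:ℝ) ≤ γ ^ 2 * (Imax : ℝ) ^ 3)
      linarith only [a1, a2, a3, cs]
    have h2 : sV₁ * ((K : ℝ) * B) ≤ C * γ * (α * K * Imax) := by
      rw [hBdef]
      have hfac : sV₁ * sV₂ ≤ (1 + V₁) * (1 + V₂) / 4 := by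
        have := mul_le_mul hsV₁le hsV₂le hsV₂0 (by linarith)
        linarith
      have hfacC : sV₁ * sV₂ ≤ C := le_trans hfac hCb
      have hnn : (0 : ℝ) ≤ (K : ℝ) * (α * γ * (Imax : ℝ)) := by positivity
      linarith only [mul_le_mul_of_nonneg_left hfacC hnn]
    have h3 : |L| / 2 * ((K : ℝ) * B) ^ 2 +
        (ρ + |L|) / 2 * (2 * (α ^ 2 * (K : ℝ) ^ 2 * γ ^ 2 * (Imax : ℝ) ^ 2 * V₂)) ≤
        C * γ * (α ^ 2 * γ * K ^ 2 * (Imax : ℝ) ^ 2) := by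
      have hKB : ((K : ℝ) * B) ^ 2 = (K : ℝ) ^ 2 * α ^ 2 * γ ^ 2 * (Imax : ℝ) ^ 2 * V₂ := by
        rw [hBdef, ← hsV₂sq]; ring
      rw [hKB]
      have hnn : (0 : ℝ) ≤ α ^ 2 * γ ^ 2 * (K : ℝ) ^ 2 * (Imax : ℝ) ^ 2 := by positivity
      have cs := mul_le_mul_of_nonneg_left hCa hnn
      linarith only [cs, mul_le_mul_of_nonneg_left (mul_nonneg hρ0 hV₂0) hnn,
        mul_nonneg (mul_nonneg hρ0 hV₂0) hnn]
    have h4 : (0 : ℝ) ≤ C * γ * (γ * K ^ 2 * (Imax : ℝ) ^ 2) := by positivity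
    have hD2' := mul_le_mul_of_nonneg_left hD2 hρL0
    rw [hRdef, hbrkdef]
    linarith only [h1, h2, h3, h4, hD2']
  -- final division
  have ha : (0:ℝ) < α * γ * ε * (T : ℝ) * (Imin : ℝ) :=
    mul_pos (mul_pos (mul_pos (mul_pos hα0 hγ) hε) hT0) hImin0
  have hb : (0:ℝ) < ε * (Imin : ℝ) := mul_pos hε hImin0
  rw [div_add_div _ _ (ne_of_gt ha) (ne_of_gt hb), le_div_iff₀ (mul_pos ha hb)]
  have h5 : (T : ℝ) * α * (ε * Imin) * R ≤ (T : ℝ) * α * (ε * Imin) * (C * γ * brk) :=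
    mul_le_mul_of_nonneg_left hRb
      (by positivity : (0:ℝ) ≤ (T : ℝ) * α * (ε * (Imin : ℝ)))
  have h6 := mul_le_mul_of_nonneg_right hkey hb.le
  linarith only [h5, h6]
end

section
/- Inner-product lower bound for the regularized descent direction. Let E be a real inner product space, u, v, w ∈ E, and ρ > 0, ε > 0, V₁ > 0 real numbers. If ‖u‖² ≤ V₁, ‖v‖² ≤ V₁, and ρ²·‖w‖² − (ρ/2)·‖w‖² ≥ (1 + 2ρ + ε)·V₁, then ⟪u + ρ·w, v + ρ·w⟫ ≥ ε·‖u‖². -/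
/-- **Inner-product lower bound for the regularized descent direction.**
If `‖u‖² ≤ V₁`, `‖v‖² ≤ V₁` and `ρ²‖w‖² - (ρ/2)‖w‖² ≥ (1 + 2ρ + ε)V₁`,
then `⟪u + ρw, v + ρw⟫ ≥ ε‖u‖²`. -/
theorem inner_lower_bound_regularized_direction
    {E : Type*} [NormedAddCommGroup E] [InnerProductSpace ℝ E]
    (u v w : E) (ρ ε V₁ : ℝ) (hρ : 0 < ρ) (hε : 0 < ε) (hV₁ : 0 < V₁)
    (hu : ‖u‖ ^ 2 ≤ V₁) (hv : ‖v‖ ^ 2 ≤ V₁)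
    (hw : (1 + 2 * ρ + ε) * V₁ ≤ ρ ^ 2 * ‖w‖ ^ 2 - ρ / 2 * ‖w‖ ^ 2) :
    ε * ‖u‖ ^ 2 ≤ inner ℝ (u + ρ • w) (v + ρ • w) := by
  have e : (inner ℝ (u + ρ • w) (v + ρ • w) : ℝ)
      = inner ℝ u v + ρ * inner ℝ u w + ρ * inner ℝ w v + ρ ^ 2 * ‖w‖ ^ 2 := by
    simp [inner_add_add_self, inner_add_left, inner_add_right, real_inner_smul_left,
      real_inner_smul_right, real_inner_self_eq_norm_sq, norm_smul, Real.norm_eq_abs, mul_pow, sq_abs]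
    ring
  have h1 := abs_real_inner_le_norm u v
  have h2 := abs_real_inner_le_norm u w
  have h3 := abs_real_inner_le_norm w v
  have n1 := neg_abs_le (inner ℝ u v : ℝ)
  have n2 := neg_abs_le (inner ℝ u w : ℝ)
  have n3 := neg_abs_le (inner ℝ w v : ℝ)
  have hun : (0:ℝ) ≤ ‖u‖ := norm_nonneg u
  have hvn : (0:ℝ) ≤ ‖v‖ := norm_nonneg v
  have hwn : (0:ℝ) ≤ ‖w‖ := norm_nonneg w
  rw [e]
  nlinarith [sq_nonneg (‖u‖ - ‖v‖), sq_nonneg (‖u‖ - ‖w‖/2), sq_nonneg (‖v‖ - ‖w‖/2),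
    mul_pos hρ hV₁, sq_nonneg ‖w‖]
end

section
/- Sorted matching minimizes the maximum ratio (core of Theorem 2). Let n ≥ 1 and let a, c : Fin n → ℝ be antitone (nonincreasing) functions with a(i) > 0 and c(i) > 0 for all i. Then for every permutation σ of Fin n: max over i ∈ Fin n of a(i)/c(i) ≤ max over i ∈ Fin n of a(σ(i))/c(i). -/
/-- **Sorted matching minimizes the maximum ratio.**
Let `a c : Fin n → ℝ` be antitone with positive values (`n ≥ 1`). Then for every
permutation `σ` of `Fin n`, `max_i a i / c i ≤ max_i a (σ i) / c i`. -/
theorem sorted_matching_minimizes_max_ratio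
    (n : ℕ) (hn : 1 ≤ n) (a c : Fin n → ℝ) (ha : Antitone a) (hc : Antitone c)
    (hapos : ∀ i, 0 < a i) (hcpos : ∀ i, 0 < c i) (σ : Equiv.Perm (Fin n)) :
    Finset.univ.sup' ⟨⟨0, hn⟩, Finset.mem_univ _⟩ (fun i => a i / c i) ≤
      Finset.univ.sup' ⟨⟨0, hn⟩, Finset.mem_univ _⟩ (fun i => a (σ i) / c i) := by
  apply Finset.sup'_le
  intro i _
  -- pigeonhole: there is j ≥ i with σ j ≤ i
  have hex : ∃ j, i ≤ j ∧ σ j ≤ i := by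
    by_contra h
    push_neg at h
    have hsub : (Finset.Ici i).image σ ⊆ Finset.Ioi i := by
      intro k hk
      simp only [Finset.mem_image, Finset.mem_Ici] at hk
      obtain ⟨j, hj, rfl⟩ := hk
      exact Finset.mem_Ioi.mpr (h j hj)
    have hcard := Finset.card_le_card hsub
    rw [Finset.card_image_of_injective _ σ.injective] at hcard
    rw [Fin.card_Ici, Fin.card_Ioi] at hcard
    have := i.isLt
    omega
  obtain ⟨j, hij, hji⟩ := hex
  have h1 : a i ≤ a (σ j) := ha hji
  have h2 : c j ≤ c i := hc hij
  have : a i / c i ≤ a (σ j) / c j :=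
    div_le_div₀ (le_of_lt (hapos _)) h1 (hcpos _) h2
  exact this.trans (Finset.le_sup' (fun k => a (σ k) / c k) (Finset.mem_univ j))
end
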